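/- arXiv:2210.12981 — 9 statements merged into one kernel-verified Lean document; each statement's English description precedes it below -/
import Mathlib

section
/- Let G be a connected graph on n vertices with m ≥ 1 edges. Then the first Zagreb index satisfies M₁(G) ≥ 4m²/n + Irr(G)²/(m·n), where M₁(G) = ∑_{u∈V} deg(u)² and Irr(G) = ∑_{(u,v)∈E}|deg(u)−deg(v)|. -/
/-- The Albertson irregularity index of a graph. -/
noncomputable def albertson {V : Type*} [Fintype V] [DecidableEq V]
    (G : SimpleGraph V) [DecidableRel G.Adj] : ℝ :=
  ∑ e ∈ G.edgeFinset,
    Sym2.lift ⟨fun u v => |(G.degree u : ℝ) - (G.degree v : ℝ)|,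
      fun u v => abs_sub_comm _ _⟩ e

lemma sum_darts_eq_twice_sum_edges {V : Type*} [Fintype V] [DecidableEq V]
    (G : SimpleGraph V) [DecidableRel G.Adj] (f : Sym2 V → ℝ) :
    ∑ d : G.Dart, f d.edge = 2 * ∑ e ∈ G.edgeFinset, f e := by
  rw [← Finset.sum_fiberwise_of_maps_to
    (g := SimpleGraph.Dart.edge) (t := G.edgeFinset)
    (fun d _ => by rw [SimpleGraph.mem_edgeFinset]; exact d.edge_mem)]
  rw [Finset.mul_sum]
  refine Finset.sum_congr rfl fun e he => ?_
  have hcard := G.dart_edge_fiber_card e (SimpleGraph.mem_edgeFinset.1 he)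
  calc ∑ d ∈ Finset.univ.filter (fun d : G.Dart => d.edge = e), f d.edge
      = ∑ d ∈ Finset.univ.filter (fun d : G.Dart => d.edge = e), f e := by
        refine Finset.sum_congr rfl fun d hd => ?_
        rw [(Finset.mem_filter.1 hd).2]
    _ = 2 * f e := by rw [Finset.sum_const, hcard]; push_cast; ring

lemma sum_darts_eq_sum_pairs {V : Type*} [Fintype V] [DecidableEq V]
    (G : SimpleGraph V) [DecidableRel G.Adj] (f : Sym2 V → ℝ) :
    ∑ d : G.Dart, f d.edge
      = ∑ p ∈ Finset.univ.filter (fun p : V × V => G.Adj p.1 p.2), f s(p.1, p.2) := by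
  refine Finset.sum_bij' (fun (d : G.Dart) (_ : d ∈ Finset.univ) => d.toProd)
    (fun p hp => ⟨p, (Finset.mem_filter.1 hp).2⟩) ?_ ?_ ?_ ?_ ?_
  · intro d _; exact Finset.mem_filter.2 ⟨Finset.mem_univ _, d.adj⟩
  · intro p _; exact Finset.mem_univ _
  · intro d _; rfl
  · intro p _; rfl
  · intro d _; rfl

theorem stmt5 {V : Type*} [Fintype V] [DecidableEq V] (G : SimpleGraph V)
    [DecidableRel G.Adj] (hG : G.Connected) (hm : 1 ≤ G.edgeFinset.card) :
    ∑ u : V, (G.degree u : ℝ) ^ 2 ≥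
      4 * (G.edgeFinset.card : ℝ) ^ 2 / Fintype.card V +
        albertson G ^ 2 / (G.edgeFinset.card * (Fintype.card V : ℝ)) := by
  classical
  set D : V → ℝ := fun u => (G.degree u : ℝ) with hD
  set n : ℝ := (Fintype.card V : ℝ) with hn
  set m : ℝ := (G.edgeFinset.card : ℝ) with hmdef
  set M : ℝ := ∑ u : V, D u ^ 2 with hM
  have hn0 : 0 < n := by
    have hne : Nonempty V := hG.nonempty
    have h : 0 < Fintype.card V := Fintype.card_pos
    rw [hn]
    exact_mod_cast h
  have hm0 : 0 < m := by
    rw [hmdef]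
    exact_mod_cast hm
  -- degree sum formula
  have hsum : ∑ u : V, D u = 2 * m := by
    rw [hD, hmdef]
    beta_reduce
    exact_mod_cast G.sum_degrees_eq_twice_card_edges
  -- the squared-difference function on Sym2
  set F : Sym2 V → ℝ := Sym2.lift ⟨fun u v => (D u - D v) ^ 2,
    fun u v => by ring⟩ with hF
  have hFmk : ∀ u v : V, F s(u, v) = (D u - D v) ^ 2 := fun u v => rfl
  set A : Sym2 V → ℝ := Sym2.lift ⟨fun u v => |D u - D v|,
    fun u v => abs_sub_comm _ _⟩ with hA
  have hAF : ∀ e : Sym2 V, A e ^ 2 = F e := by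
    intro e
    induction e with
    | _ u v => simp [hA, hF, sq_abs]
  -- Lagrange-type identity
  set P : ℝ := ∑ u : V, ∑ v : V, (D u - D v) ^ 2 with hP
  have hPid : P = 2 * n * M - 2 * ((∑ u : V, D u) * (∑ u : V, D u)) := by
    have : ∀ u : V, ∑ v : V, (D u - D v) ^ 2
        = n * D u ^ 2 - 2 * D u * (∑ v : V, D v) + M := by
      intro u
      have : ∀ v : V, (D u - D v) ^ 2 = D u ^ 2 - 2 * D u * D v + D v ^ 2 :=
        fun v => by ring
      rw [Finset.sum_congr rfl (fun v _ => this v)]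
      rw [Finset.sum_add_distrib, Finset.sum_sub_distrib, Finset.sum_const,
        ← Finset.mul_sum, Finset.card_univ, nsmul_eq_mul, hn, hM]
    rw [hP, Finset.sum_congr rfl (fun u _ => this u)]
    rw [Finset.sum_add_distrib, Finset.sum_sub_distrib, Finset.sum_const,
      ← Finset.mul_sum, Finset.card_univ, nsmul_eq_mul]
    have h2 : ∑ u : V, 2 * D u * (∑ v : V, D v)
        = 2 * ((∑ u : V, D u) * (∑ u : V, D u)) := by
      rw [← Finset.sum_mul, ← Finset.mul_sum]
      ring
    rw [h2, ← hn, ← hM]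
    ring
  -- edge sum of squared differences
  set E2 : ℝ := ∑ e ∈ G.edgeFinset, F e with hE2
  have hEP : 2 * E2 ≤ P := by
    rw [hE2, ← sum_darts_eq_twice_sum_edges, sum_darts_eq_sum_pairs]
    have hle : ∑ p ∈ Finset.univ.filter (fun p : V × V => G.Adj p.1 p.2),
        F s(p.1, p.2) ≤ ∑ p : V × V, F s(p.1, p.2) := by
      refine Finset.sum_le_sum_of_subset_of_nonneg (Finset.filter_subset _ _) ?_
      intro p _ _
      rw [hFmk]
      positivity
    refine hle.trans_eq ?_
    rw [hP, ← Finset.sum_product']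
    refine Finset.sum_congr rfl fun p _ => (hFmk p.1 p.2)
  -- Cauchy-Schwarz
  have hCS : albertson G ^ 2 ≤ m * E2 := by
    have := Finset.sum_mul_sq_le_sq_mul_sq G.edgeFinset (fun _ => (1 : ℝ)) A
    simp only [one_mul, one_pow, Finset.sum_const, nsmul_eq_mul, mul_one] at this
    calc albertson G ^ 2 = (∑ e ∈ G.edgeFinset, A e) ^ 2 := by rw [albertson, hA]
      _ ≤ (G.edgeFinset.card : ℝ) * ∑ e ∈ G.edgeFinset, A e ^ 2 := this
      _ = m * E2 := by
          rw [hmdef, hE2]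
          congr 1
          exact Finset.sum_congr rfl fun e _ => hAF e
  -- combine
  have key : 4 * m ^ 2 + albertson G ^ 2 / m ≤ n * M := by
    have h1 : albertson G ^ 2 / m ≤ E2 := by
      rw [div_le_iff₀ hm0]; linarith [hCS]
    have h2 : E2 ≤ n * M - 4 * m ^ 2 := by
      have := hPid
      rw [hsum] at this
      nlinarith [hEP]
    linarith
  rw [ge_iff_le]
  have heq : 4 * m ^ 2 / n + albertson G ^ 2 / (m * n)
      = (4 * m ^ 2 + albertson G ^ 2 / m) / n := by
    rw [add_div, div_div]
  rw [heq, div_le_iff₀ hn0]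
  calc 4 * m ^ 2 + albertson G ^ 2 / m ≤ n * M := key
    _ = M * n := mul_comm _ _
end

section
/- Let d₁,…,dₙ be the vertex degrees of a connected graph G with m ≥ 1 edges. Then ∑ᵢ dᵢ² ≥ (∑ᵢ dᵢ)²/n + (∑_{i∼j} |dᵢ − dⱼ|)²/(m·n), where the inner sum is over edges of G. -/
theorem stmt7 {V : Type*} [Fintype V] [DecidableEq V] (G : SimpleGraph V)
    [DecidableRel G.Adj] (hG : G.Connected) (hm : 1 ≤ G.edgeFinset.card)
    (d : V → ℕ) (hd : ∀ i, d i = G.degree i) :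
    ∑ i : V, (d i : ℝ) ^ 2 ≥
      (∑ i : V, (d i : ℝ)) ^ 2 / Fintype.card V +
        (∑ e ∈ G.edgeFinset,
            Sym2.lift ⟨fun u v => |(d u : ℝ) - (d v : ℝ)|,
              fun u v => abs_sub_comm _ _⟩ e) ^ 2 /
          (G.edgeFinset.card * (Fintype.card V : ℝ)) := by
  classical
  have hne : Nonempty V := hG.nonempty
  set f : V → ℝ := fun i => (d i : ℝ) with hf
  set φ : Sym2 V → ℝ := Sym2.lift ⟨fun u v => (f u - f v) ^ 2, fun u v => by ring⟩ with hφ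
  set E : ℝ := ∑ e ∈ G.edgeFinset, φ e with hE
  set T : ℝ := ∑ e ∈ G.edgeFinset,
      Sym2.lift ⟨fun u v => |(d u : ℝ) - (d v : ℝ)|, fun u v => abs_sub_comm _ _⟩ e with hT
  set S : ℝ := ∑ i : V, f i with hS
  set Q : ℝ := ∑ i : V, f i ^ 2 with hQ
  set n : ℝ := (Fintype.card V : ℝ) with hn
  set m : ℝ := (G.edgeFinset.card : ℝ) with hm'
  have hn0 : 0 < n := by
    rw [hn]
    exact_mod_cast (Fintype.card_pos : 0 < Fintype.card V)
  have hm0 : 0 < m := by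
    rw [hm']
    exact_mod_cast hm
  -- Cauchy–Schwarz: T ^ 2 ≤ m * E
  have hCS : T ^ 2 ≤ m * E := by
    have h1 : T ^ 2 ≤ (G.edgeFinset.card : ℝ) * ∑ e ∈ G.edgeFinset,
        (Sym2.lift ⟨fun u v => |(d u : ℝ) - (d v : ℝ)|, fun u v => abs_sub_comm _ _⟩ e) ^ 2 := by
      rw [hT]
      exact sq_sum_le_card_mul_sum_sq
    have h2 : ∑ e ∈ G.edgeFinset,
        (Sym2.lift ⟨fun u v => |(d u : ℝ) - (d v : ℝ)|, fun u v => abs_sub_comm _ _⟩ e) ^ 2 = E := by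
      refine Finset.sum_congr rfl fun e _ => ?_
      induction e with
      | _ u v => simp [hφ, sq_abs, hf]
    rw [h2] at h1
    exact h1
  -- darts: 2 * E
  have hdart : ∑ dt : G.Dart, (f dt.fst - f dt.snd) ^ 2 = 2 * E := by
    have key : ∑ dt : G.Dart, φ dt.edge = ∑ e ∈ G.edgeFinset,
        ∑ dt ∈ Finset.univ.filter (fun dt : G.Dart => dt.edge = e), φ dt.edge :=
      (Finset.sum_fiberwise_of_maps_to (fun dt _ => SimpleGraph.mem_edgeFinset.2 dt.edge_mem) _).symm
    have eval : ∀ dt : G.Dart, φ dt.edge = (f dt.fst - f dt.snd) ^ 2 := by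
      intro dt
      rcases dt with ⟨⟨a, b⟩, h⟩
      simp [hφ, SimpleGraph.Dart.edge]
    calc ∑ dt : G.Dart, (f dt.fst - f dt.snd) ^ 2
        = ∑ dt : G.Dart, φ dt.edge := by
          exact Finset.sum_congr rfl fun dt _ => (eval dt).symm
      _ = ∑ e ∈ G.edgeFinset,
          ∑ dt ∈ Finset.univ.filter (fun dt : G.Dart => dt.edge = e), φ dt.edge := key
      _ = ∑ e ∈ G.edgeFinset, 2 * φ e := by
          refine Finset.sum_congr rfl fun e he => ?_
          rw [Finset.sum_congr rfl (fun dt hdt => by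
            rw [(Finset.mem_filter.1 hdt).2]), Finset.sum_const]
          have hc : (Finset.univ.filter (fun dt : G.Dart => dt.edge = e)).card = 2 := by
            have := G.dart_edge_fiber_card e (SimpleGraph.mem_edgeFinset.1 he)
            simpa using this
          rw [hc]
          simp [two_mul]
      _ = 2 * E := by rw [hE, Finset.mul_sum]
  -- darts ≤ all ordered pairs
  have hpairs : ∑ dt : G.Dart, (f dt.fst - f dt.snd) ^ 2 ≤
      ∑ p ∈ Finset.univ ×ˢ Finset.univ, (f p.1 - f p.2) ^ 2 := by
    have heq : ∑ dt : G.Dart, (f dt.fst - f dt.snd) ^ 2 =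
        ∑ p ∈ Finset.univ.filter (fun p : V × V => G.Adj p.1 p.2), (f p.1 - f p.2) ^ 2 := by
      refine Finset.sum_bij' (i := fun dt _ => (dt.fst, dt.snd))
        (j := fun p hp => (⟨p, (Finset.mem_filter.1 hp).2⟩ : G.Dart)) ?_ ?_ ?_ ?_ ?_
      · intro dt _
        simp [dt.adj]
      · intro p hp
        exact Finset.mem_univ _
      · intro dt _
        rfl
      · intro p hp
        rfl
      · intro dt _
        rfl
    rw [heq]
    refine Finset.sum_le_sum_of_subset_of_nonneg ?_ (fun p _ _ => by positivity)
    intro p hp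
    simp
  -- expand the full double sum
  have row : ∀ i : V, ∑ j : V, (f i - f j) ^ 2 = n * f i ^ 2 - 2 * f i * S + Q := by
    intro i
    calc ∑ j : V, (f i - f j) ^ 2
        = ∑ j : V, (f i ^ 2 - 2 * f i * f j + f j ^ 2) :=
          Finset.sum_congr rfl fun j _ => by ring
      _ = n * f i ^ 2 - 2 * f i * S + Q := by
          rw [Finset.sum_add_distrib, Finset.sum_sub_distrib, Finset.sum_const,
            Finset.card_univ, nsmul_eq_mul, ← Finset.mul_sum, ← hS, ← hQ, ← hn]
  have h2s : ∑ i : V, 2 * f i * S = 2 * S * S := by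
    calc ∑ i : V, 2 * f i * S = ∑ i : V, f i * (2 * S) :=
          Finset.sum_congr rfl fun i _ => by ring
      _ = S * (2 * S) := by rw [← Finset.sum_mul, ← hS]
      _ = 2 * S * S := by ring
  have hexpand : ∑ p ∈ Finset.univ ×ˢ Finset.univ, (f p.1 - f p.2) ^ 2 =
      2 * n * Q - 2 * S ^ 2 := by
    calc ∑ p ∈ Finset.univ ×ˢ Finset.univ, (f p.1 - f p.2) ^ 2
        = ∑ i : V, ∑ j : V, (f i - f j) ^ 2 := Finset.sum_product _ _ _
      _ = ∑ i : V, (n * f i ^ 2 - 2 * f i * S + Q) :=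
          Finset.sum_congr rfl fun i _ => row i
      _ = n * Q - 2 * S * S + n * Q := by
          rw [Finset.sum_add_distrib, Finset.sum_sub_distrib, ← Finset.mul_sum, h2s,
            Finset.sum_const, Finset.card_univ, nsmul_eq_mul, ← hQ, ← hn]
      _ = 2 * n * Q - 2 * S ^ 2 := by ring
  have hEle : S ^ 2 + E ≤ n * Q := by
    have := hpairs
    rw [hdart, hexpand] at this
    linarith
  have h1 : T ^ 2 / (m * n) ≤ E / n := by
    rw [div_le_div_iff₀ (mul_pos hm0 hn0) hn0]
    have := mul_le_mul_of_nonneg_right hCS hn0.le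
    nlinarith
  have h2 : S ^ 2 / n + E / n ≤ Q := by
    rw [← add_div, div_le_iff₀ hn0]
    linarith
  have : S ^ 2 / n + T ^ 2 / (m * n) ≤ Q := by linarith
  simpa [hS, hQ, hT, hn, hm', hf, ge_iff_le] using this
end

section
/- Let G be a connected graph on n vertices with m edges. Then IRB(G) ≤ 2mn − (∑_{v∈V} √deg(v))², where IRB(G) = ∑_{(u,v)∈E}(√deg(u) − √deg(v))². -/
/-- The IRB irregularity index of a graph. -/
noncomputable def irb {V : Type*} [Fintype V] [DecidableEq V]
    (G : SimpleGraph V) [DecidableRel G.Adj] : ℝ :=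
  ∑ e ∈ G.edgeFinset,
    Sym2.lift ⟨fun u v => (Real.sqrt (G.degree u) - Real.sqrt (G.degree v)) ^ 2,
      fun u v => by ring⟩ e

theorem stmt8 {V : Type*} [Fintype V] [DecidableEq V] (G : SimpleGraph V)
    [DecidableRel G.Adj] (hG : G.Connected) :
    irb G ≤ 2 * G.edgeFinset.card * (Fintype.card V : ℝ) -
      (∑ v : V, Real.sqrt (G.degree v)) ^ 2 := by
  classical
  set s : V → ℝ := fun v => Real.sqrt (G.degree v) with hs
  set F : Sym2 V → ℝ := Sym2.lift ⟨fun u v => (s u - s v) ^ 2, fun u v => by ring⟩ with hF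
  set A : Finset (V × V) := Finset.univ.filter (fun p : V × V => G.Adj p.1 p.2) with hA
  have hsq : ∀ v, s v ^ 2 = (G.degree v : ℝ) := fun v =>
    Real.sq_sqrt (by positivity)
  -- Step 1: 2 * irb G = sum over ordered adjacent pairs
  have himg : A.image (fun p : V × V => s(p.1, p.2)) = G.edgeFinset := by
    ext e
    induction e with
    | _ a b =>
      simp only [Finset.mem_image, hA, Finset.mem_filter, Finset.mem_univ, true_and,
        SimpleGraph.mem_edgeFinset, SimpleGraph.mem_edgeSet]
      constructor
      · rintro ⟨p, hp, he⟩
        rw [Sym2.eq_iff] at he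
        rcases he with ⟨h1, h2⟩ | ⟨h1, h2⟩
        · rwa [h1, h2] at hp
        · rw [h1, h2] at hp; exact hp.symm
      · intro h
        exact ⟨(a, b), h, rfl⟩
  have hfiber : ∀ e ∈ G.edgeFinset,
      (A.filter (fun p : V × V => s(p.1, p.2) = e)).card = 2 := by
    intro e he
    induction e with
    | _ a b =>
      rw [SimpleGraph.mem_edgeFinset, SimpleGraph.mem_edgeSet] at he
      have hab : a ≠ b := G.ne_of_adj he
      have : A.filter (fun p : V × V => s(p.1, p.2) = s(a, b)) = {(a, b), (b, a)} := by
        ext ⟨x, y⟩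
        simp only [Finset.mem_filter, hA, Finset.mem_univ, true_and, Sym2.eq_iff,
          Finset.mem_insert, Finset.mem_singleton, Prod.mk.injEq]
        constructor
        · rintro ⟨hadj, ⟨h1, h2⟩ | ⟨h1, h2⟩⟩
          · exact Or.inl ⟨h1, h2⟩
          · exact Or.inr ⟨h1, h2⟩
        · rintro (⟨h1, h2⟩ | ⟨h1, h2⟩)
          · subst h1; subst h2; exact ⟨he, Or.inl ⟨rfl, rfl⟩⟩
          · subst h1; subst h2; exact ⟨he.symm, Or.inr ⟨rfl, rfl⟩⟩
      rw [this]
      rw [Finset.card_insert_of_notMem (by simp [hab]), Finset.card_singleton]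
  have hstep1 : ∑ p ∈ A, (s p.1 - s p.2) ^ 2 = 2 * irb G := by
    have := Finset.sum_comp F (fun p : V × V => s(p.1, p.2)) (s := A)
    rw [himg] at this
    have hlift : ∀ p : V × V, F s(p.1, p.2) = (s p.1 - s p.2) ^ 2 := fun p => rfl
    simp only [hlift] at this
    rw [this, irb, Finset.mul_sum]
    refine Finset.sum_congr rfl fun e he => ?_
    rw [hfiber e he]
    simp [F]; rfl
  -- Step 2: sum over all ordered pairs
  have hall : ∑ p : V × V, (s p.1 - s p.2) ^ 2 =
      2 * (2 * G.edgeFinset.card * (Fintype.card V : ℝ) - (∑ v : V, s v) ^ 2) := by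
    have hexp : ∀ p : V × V, (s p.1 - s p.2) ^ 2 =
        (G.degree p.1 : ℝ) + (G.degree p.2 : ℝ) - 2 * (s p.1 * s p.2) := by
      intro p
      have h1 := hsq p.1
      have h2 := hsq p.2
      nlinarith [h1, h2]
    simp only [hexp]
    rw [Finset.sum_sub_distrib, Finset.sum_add_distrib, ← Finset.mul_sum]
    have hdeg : (∑ v : V, (G.degree v : ℝ)) = 2 * G.edgeFinset.card := by
      rw [← Nat.cast_sum, SimpleGraph.sum_degrees_eq_twice_card_edges]
      push_cast
      ring
    have h1 : ∑ p : V × V, (G.degree p.1 : ℝ) = 2 * G.edgeFinset.card * (Fintype.card V : ℝ) := by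
      rw [Fintype.sum_prod_type]
      simp only [Finset.sum_const, Finset.card_univ, nsmul_eq_mul]
      rw [Finset.sum_comm]; simp only [Finset.sum_const, Finset.card_univ, nsmul_eq_mul, hdeg]; ring
    have h2 : ∑ p : V × V, (G.degree p.2 : ℝ) = 2 * G.edgeFinset.card * (Fintype.card V : ℝ) := by
      rw [Fintype.sum_prod_type_right]
      simp only [Finset.sum_const, Finset.card_univ, nsmul_eq_mul]
      rw [Finset.sum_comm]; simp only [Finset.sum_const, Finset.card_univ, nsmul_eq_mul, hdeg]; ring
    have h3 : ∑ p : V × V, s p.1 * s p.2 = (∑ v : V, s v) ^ 2 := by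
      rw [Fintype.sum_prod_type, sq]
      rw [Finset.sum_mul_sum]
    rw [h1, h2, h3]
    ring
  -- Step 3: combine
  have hsub : ∑ p ∈ A, (s p.1 - s p.2) ^ 2 ≤ ∑ p : V × V, (s p.1 - s p.2) ^ 2 := by
    apply Finset.sum_le_sum_of_subset_of_nonneg (Finset.filter_subset _ _)
    intro p _ _
    positivity
  rw [hstep1, hall] at hsub
  linarith
end

section
/- Let G be a connected graph on n vertices with m edges, and suppose the graph energy satisfies E(G) ≤ ∑_{v∈V} √deg(v). Then E(G) ≤ √(2mn − IRB(G)), where IRB(G) = ∑_{(u,v)∈E}(√deg(u) − √deg(v))² and E(G) is the sum of absolute values of the adjacency eigenvalues. -/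
/-- The adjacency matrix of a graph is Hermitian (over `ℝ`). -/
theorem adjMatrix_isHermitian {V : Type*} [Fintype V] (G : SimpleGraph V)
    [DecidableRel G.Adj] : (G.adjMatrix ℝ).IsHermitian := by
  ext i j
  simp [Matrix.conjTranspose_apply, SimpleGraph.adjMatrix_apply, G.adj_comm]

/-- The energy of a graph: the sum of the absolute values of the eigenvalues
of its adjacency matrix. -/
noncomputable def graphEnergy {V : Type*} [Fintype V] [DecidableEq V]
    (G : SimpleGraph V) [DecidableRel G.Adj] : ℝ :=
  ∑ i, |(adjMatrix_isHermitian G).eigenvalues i|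

open Finset in
/-- Twice a sum of a nonnegative symmetric function over the edges is at most
the sum over all ordered pairs of vertices. -/
lemma edge_sum_le_pair_sum {V : Type*} [Fintype V] [DecidableEq V]
    (G : SimpleGraph V) [DecidableRel G.Adj] (f : V → V → ℝ)
    (hsymm : ∀ u v, f u v = f v u) (hnn : ∀ u v, 0 ≤ f u v) :
    2 * ∑ e ∈ G.edgeFinset, Sym2.lift ⟨f, hsymm⟩ e ≤ ∑ u, ∑ v, f u v := by
  have key : ∑ p ∈ (univ ×ˢ univ).filter (fun p : V × V => G.Adj p.1 p.2), f p.1 p.2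
      = 2 * ∑ e ∈ G.edgeFinset, Sym2.lift ⟨f, hsymm⟩ e := by
    rw [Finset.mul_sum, ← Finset.sum_fiberwise_of_maps_to
      (g := fun p : V × V => s(p.1, p.2)) (t := G.edgeFinset)
      (fun p hp => by simpa [SimpleGraph.mem_edgeFinset] using (Finset.mem_filter.1 hp).2)]
    refine Finset.sum_congr rfl ?_
    intro e he
    induction e with
    | _ a b =>
      have hadj : G.Adj a b := by simpa [SimpleGraph.mem_edgeFinset] using he
      have hne : a ≠ b := hadj.ne
      have hset : ((univ ×ˢ univ).filter (fun p : V × V => G.Adj p.1 p.2)).filter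
          (fun p => s(p.1, p.2) = s(a, b)) = {(a, b), (b, a)} := by
        ext ⟨u, v⟩
        simp only [Finset.mem_filter, Finset.mem_product, Finset.mem_univ, true_and,
          Finset.mem_insert, Finset.mem_singleton, Sym2.eq_iff, Prod.mk.injEq]
        constructor
        · rintro ⟨-, (⟨rfl, rfl⟩ | ⟨rfl, rfl⟩)⟩ <;> simp
        · rintro (⟨rfl, rfl⟩ | ⟨rfl, rfl⟩)
          · exact ⟨hadj, Or.inl ⟨rfl, rfl⟩⟩
          · exact ⟨hadj.symm, Or.inr ⟨rfl, rfl⟩⟩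
      rw [hset, Finset.sum_pair (by simp [hne, Ne.symm hne] : ((a,b) : V × V) ≠ (b,a))]
      simp only [Sym2.lift_mk]
      rw [hsymm b a]
      ring
  rw [← key, ← Finset.sum_product']
  exact Finset.sum_le_sum_of_subset_of_nonneg (Finset.filter_subset _ _)
    (fun p _ _ => hnn p.1 p.2)

theorem stmt9 {V : Type*} [Fintype V] [DecidableEq V] (G : SimpleGraph V)
    [DecidableRel G.Adj] (hG : G.Connected)
    (hE : graphEnergy G ≤ ∑ v : V, Real.sqrt (G.degree v)) :
    graphEnergy G ≤
      Real.sqrt (2 * G.edgeFinset.card * (Fintype.card V : ℝ) - irb G) := by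
  set x : V → ℝ := fun v => Real.sqrt (G.degree v) with hx
  set S : ℝ := ∑ v, x v with hS
  have hS0 : 0 ≤ S := Finset.sum_nonneg fun v _ => Real.sqrt_nonneg _
  have hdeg : ∑ v, (x v) ^ 2 = 2 * (G.edgeFinset.card : ℝ) := by
    have h1 : ∀ v, (x v) ^ 2 = (G.degree v : ℝ) := fun v =>
      Real.sq_sqrt (by positivity)
    simp only [h1]
    rw [← Nat.cast_sum, SimpleGraph.sum_degrees_eq_twice_card_edges]
    push_cast; ring
  have hSsq : ∑ u : V, ∑ v : V, 2 * (x u * x v) = 2 * S ^ 2 := by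
    rw [hS, sq, Finset.sum_mul_sum, Finset.mul_sum]
    congr 1 with u
    rw [Finset.mul_sum]
  have hpair : ∑ u, ∑ v, (x u - x v) ^ 2
      = 2 * (Fintype.card V : ℝ) * (2 * (G.edgeFinset.card : ℝ)) - 2 * S ^ 2 := by
    have expand : ∀ u v : V, (x u - x v) ^ 2 = x u ^ 2 + x v ^ 2 - 2 * (x u * x v) := by
      intro u v; ring
    simp only [expand, Finset.sum_sub_distrib, Finset.sum_add_distrib, Finset.sum_const,
      Finset.card_univ, nsmul_eq_mul]
    rw [hSsq, ← Finset.mul_sum, hdeg]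
    ring
  have h2 : 2 * irb G ≤ ∑ u, ∑ v, (x u - x v) ^ 2 :=
    edge_sum_le_pair_sum G (fun u v => (x u - x v) ^ 2)
      (fun u v => by ring) (fun u v => sq_nonneg _)
  refine hE.trans ?_
  rw [← Real.sqrt_sq hS0]
  refine Real.sqrt_le_sqrt ?_
  nlinarith [h2, hpair]
end

section
/- Let G be a connected bipartite graph on n vertices with m ≥ 1 edges. Then Mo(G) ≤ √(m²n² − 4m·Sz(G)), where Mo(G) = ∑_{e=(u,v)∈E}|n_e(u) − n_e(v)| is the Mostar index and Sz(G) = ∑_{e=(u,v)∈E} n_e(u)·n_e(v) is the Szeged index. -/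
/-- The number of vertices strictly closer to `u` than to `v`. -/
noncomputable def closerCount {V : Type*} (G : SimpleGraph V) (u v : V) : ℕ :=
  ({w | G.dist w u < G.dist w v} : Set V).ncard

/-- The Mostar index of a graph. -/
noncomputable def mostar {V : Type*} [Fintype V] [DecidableEq V]
    (G : SimpleGraph V) [DecidableRel G.Adj] : ℝ :=
  ∑ e ∈ G.edgeFinset,
    Sym2.lift ⟨fun u v => |(closerCount G u v : ℝ) - (closerCount G v u : ℝ)|,
      fun u v => abs_sub_comm _ _⟩ e

/-- The Szeged index of a graph. -/
noncomputable def szeged {V : Type*} [Fintype V] [DecidableEq V]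
    (G : SimpleGraph V) [DecidableRel G.Adj] : ℝ :=
  ∑ e ∈ G.edgeFinset,
    Sym2.lift ⟨fun u v => (closerCount G u v : ℝ) * (closerCount G v u : ℝ),
      fun u v => mul_comm _ _⟩ e

theorem stmt11 {V : Type*} [Fintype V] [DecidableEq V] (G : SimpleGraph V)
    [DecidableRel G.Adj] (hG : G.Connected) (hbip : G.Colorable 2)
    (hm : 1 ≤ G.edgeFinset.card) :
    mostar G ≤ Real.sqrt ((G.edgeFinset.card : ℝ) ^ 2 * (Fintype.card V : ℝ) ^ 2 -
      4 * G.edgeFinset.card * szeged G) := by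
  classical
  obtain ⟨C⟩ := hbip
  set c : V → ZMod 2 := fun v => ((C v : Fin 2).val : ZMod 2) with hc
  have hcinj : ∀ u v : V, G.Adj u v → c u ≠ c v := by
    intro u v huv h
    apply C.valid huv
    have : ((C u : Fin 2).val : ZMod 2) = ((C v : Fin 2).val : ZMod 2) := h
    have := congrArg ZMod.val this
    rw [ZMod.val_natCast_of_lt (C u).isLt, ZMod.val_natCast_of_lt (C v).isLt] at this
    exact Fin.ext this
  have hadj : ∀ u v : V, G.Adj u v → c v = c u + 1 := by
    intro u v huv
    have h := hcinj u v huv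
    revert h; generalize c u = a; generalize c v = b; revert a b; decide
  have hwalk : ∀ (x y : V) (p : G.Walk x y), c y = c x + (p.length : ZMod 2) := by
    intro x y p
    induction p with
    | nil => simp
    | cons h p ih =>
      rw [ih, hadj _ _ h]
      push_cast [SimpleGraph.Walk.length_cons]
      ring
  -- key distance fact
  have hdist : ∀ u v : V, G.Adj u v → ∀ w : V, G.dist w u ≠ G.dist w v := by
    intro u v huv w h
    obtain ⟨p, hp⟩ := hG.exists_walk_length_eq_dist w u
    obtain ⟨q, hq⟩ := hG.exists_walk_length_eq_dist w v
    apply hcinj u v huv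
    rw [hwalk w u p, hwalk w v q, hp, hq, h]
  have hsum : ∀ u v : V, G.Adj u v →
      closerCount G u v + closerCount G v u = Fintype.card V := by
    intro u v huv
    have hcompl : ({w | G.dist w v < G.dist w u} : Set V)
        = ({w | G.dist w u < G.dist w v} : Set V)ᶜ := by
      ext w
      have := hdist u v huv w
      simp only [Set.mem_setOf_eq, Set.mem_compl_iff, not_lt]
      omega
    rw [closerCount, closerCount, hcompl, Set.ncard_add_ncard_compl]
    simp [Set.ncard_univ]
  set n : ℝ := (Fintype.card V : ℝ) with hn
  set m : ℝ := (G.edgeFinset.card : ℝ)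
  set F : Sym2 V → ℝ := fun e => Sym2.lift
    ⟨fun u v => |(closerCount G u v : ℝ) - (closerCount G v u : ℝ)|,
      fun u v => abs_sub_comm _ _⟩ e with hF
  set P : Sym2 V → ℝ := fun e => Sym2.lift
    ⟨fun u v => (closerCount G u v : ℝ) * (closerCount G v u : ℝ),
      fun u v => mul_comm _ _⟩ e with hP
  have hkey : ∀ e ∈ G.edgeFinset, F e ^ 2 = n ^ 2 - 4 * P e := by
    intro e he
    rw [SimpleGraph.mem_edgeFinset] at he
    induction e with
    | _ u v =>
      have huv : G.Adj u v := he
      have h := hsum u v huv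
      have h' : (closerCount G u v : ℝ) + (closerCount G v u : ℝ) = n := by
        rw [hn, ← h]; push_cast; ring
      simp only [hF, hP, Sym2.lift_mk]
      rw [sq_abs, ← h']
      ring
  have hsq : (∑ e ∈ G.edgeFinset, F e) ^ 2 ≤ m ^ 2 * n ^ 2 - 4 * m * szeged G := by
    calc (∑ e ∈ G.edgeFinset, F e) ^ 2
        = (∑ e ∈ G.edgeFinset, F e * 1) ^ 2 := by simp
      _ ≤ (∑ e ∈ G.edgeFinset, F e ^ 2) * (∑ e ∈ G.edgeFinset, (1:ℝ) ^ 2) :=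
          Finset.sum_mul_sq_le_sq_mul_sq _ _ _
      _ = (∑ e ∈ G.edgeFinset, (n ^ 2 - 4 * P e)) * m := by
          rw [Finset.sum_congr rfl hkey]; simp [m, mul_comm]
      _ = m ^ 2 * n ^ 2 - 4 * m * szeged G := by
          rw [Finset.sum_sub_distrib, Finset.sum_const, ← Finset.mul_sum, nsmul_eq_mul]
          have hsz : ∑ i ∈ G.edgeFinset, P i = szeged G := rfl
          rw [hsz]; ring
  have hM0 : 0 ≤ mostar G :=
    Finset.sum_nonneg fun e _ => by
      induction e with
      | _ u v => exact abs_nonneg _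
  have hy : (0:ℝ) ≤ m ^ 2 * n ^ 2 - 4 * m * szeged G :=
    le_trans (sq_nonneg _) hsq
  rw [Real.le_sqrt hM0 hy]
  exact hsq
end

section
/- Let G be a connected graph of order n ≥ 3 and size m. Then 0 ≤ Mo(G) ≤ m(n−2), where Mo(G) = ∑_{e=(u,v)∈E}|n_e(u) − n_e(v)|. -/
lemma key {V : Type*} [Fintype V] (G : SimpleGraph V) {u v : V} (huv : G.Adj u v) :
    1 ≤ closerCount G u v ∧
    closerCount G u v + closerCount G v u ≤ Fintype.card V := by
  set A : Set V := {w | G.dist w u < G.dist w v}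
  set B : Set V := {w | G.dist w v < G.dist w u}
  have hA : A.Finite := Set.toFinite _
  have hB : B.Finite := Set.toFinite _
  constructor
  · have hu : u ∈ A := by
      simp only [A, Set.mem_setOf_eq, SimpleGraph.dist_self]
      have : G.dist u v = 1 := SimpleGraph.dist_eq_one_iff_adj.mpr huv
      omega
    exact (Set.ncard_pos hA).mpr ⟨u, hu⟩
  · have hdisj : Disjoint A B := by
      rw [Set.disjoint_left]
      intro w hwA hwB
      simp only [A, B, Set.mem_setOf_eq] at hwA hwB
      omega
    calc closerCount G u v + closerCount G v u = (A ∪ B).ncard := by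
          rw [Set.ncard_union_eq hdisj hA hB]; rfl
      _ ≤ (Set.univ : Set V).ncard := Set.ncard_le_ncard (Set.subset_univ _) (Set.toFinite _)
      _ = Fintype.card V := by rw [Set.ncard_univ, Nat.card_eq_fintype_card]

theorem stmt14 {V : Type*} [Fintype V] [DecidableEq V] (G : SimpleGraph V)
    [DecidableRel G.Adj] (hG : G.Connected) (hn : 3 ≤ Fintype.card V) :
    0 ≤ mostar G ∧
      mostar G ≤ (G.edgeFinset.card : ℝ) * ((Fintype.card V : ℝ) - 2) := by
  constructor
  · apply Finset.sum_nonneg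
    intro e he
    induction e using Sym2.ind with
    | _ u v => simpa using abs_nonneg _
  · have h : ∀ e ∈ G.edgeFinset,
        Sym2.lift ⟨fun u v => |(closerCount G u v : ℝ) - (closerCount G v u : ℝ)|,
          fun u v => abs_sub_comm _ _⟩ e ≤ (Fintype.card V : ℝ) - 2 := by
      intro e he
      induction e using Sym2.ind with
      | _ u v =>
        rw [SimpleGraph.mem_edgeFinset, SimpleGraph.mem_edgeSet] at he
        obtain ⟨h1, h3⟩ := key G he
        obtain ⟨h2, _⟩ := key G he.symm
        simp only [Sym2.lift_mk]
        rw [abs_sub_le_iff]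
        have ha : (1:ℝ) ≤ closerCount G u v := by exact_mod_cast h1
        have hb : (1:ℝ) ≤ closerCount G v u := by exact_mod_cast h2
        have hab : (closerCount G u v : ℝ) + closerCount G v u ≤ Fintype.card V := by
          exact_mod_cast h3
        constructor <;> linarith
    calc mostar G ≤ ∑ _e ∈ G.edgeFinset, ((Fintype.card V : ℝ) - 2) :=
          Finset.sum_le_sum h
      _ = (G.edgeFinset.card : ℝ) * ((Fintype.card V : ℝ) - 2) := by
          rw [Finset.sum_const, nsmul_eq_mul]
end

section
/- Let G be a connected graph of diameter 2. Then Mo(G) = Irr(G), where Mo(G) = ∑_{e=(u,v)∈E}|n_e(u) − n_e(v)| and Irr(G) = ∑_{(u,v)∈E}|deg(u) − deg(v)|. -/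
lemma closerCount_eq {V : Type*} [Fintype V] [DecidableEq V] (G : SimpleGraph V)
    [DecidableRel G.Adj] (hG : G.Connected) (hdiam : G.diam = 2) {u v : V}
    (huv : G.Adj u v) :
    closerCount G u v =
      (insert u ((G.neighborFinset u \ G.neighborFinset v).erase v)).card := by
  have hle : ∀ w x : V, G.dist w x ≤ 2 := by
    intro w x
    calc G.dist w x ≤ G.diam :=
          SimpleGraph.dist_le_diam (SimpleGraph.ediam_ne_top_of_diam_ne_zero
            (by rw [hdiam]; norm_num))
      _ = 2 := hdiam
  have hset : ({w | G.dist w u < G.dist w v} : Set V) =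
      ↑(insert u ((G.neighborFinset u \ G.neighborFinset v).erase v)) := by
    ext w
    simp only [Set.mem_setOf_eq, Finset.mem_coe, Finset.mem_insert,
      Finset.mem_erase, Finset.mem_sdiff, SimpleGraph.mem_neighborFinset]
    constructor
    · intro h
      rcases Nat.lt_or_ge 0 (G.dist w u) with h0 | h0
      · right
        have hwu : G.dist w u = 1 := by
          have h2 : G.dist w v ≤ 2 := hle w v
          omega
        have hadj : G.Adj w u := (SimpleGraph.dist_eq_one_iff_adj).mp hwu
        have hwv : ¬ G.Adj w v := by
          intro hc
          have := (SimpleGraph.dist_eq_one_iff_adj).mpr hc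
          omega
        refine ⟨?_, hadj.symm, fun hc => hwv hc.symm⟩
        intro hc
        subst hc
        simp [SimpleGraph.dist_self] at h
      · left
        have hwu : G.dist w u = 0 := by omega
        have := hG.dist_eq_zero_iff.mp hwu
        exact this
    · intro h
      rcases h with rfl | ⟨hne, hadj, hnadj⟩
      · rw [SimpleGraph.dist_self]
        have : G.dist w v = 1 := SimpleGraph.dist_eq_one_iff_adj.mpr huv
        omega
      · rw [SimpleGraph.dist_eq_one_iff_adj.mpr hadj.symm]
        have h0 : G.dist w v ≠ 0 := fun hc => hne (hG.dist_eq_zero_iff.mp hc)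
        have h1 : G.dist w v ≠ 1 := fun hc =>
          hnadj (SimpleGraph.dist_eq_one_iff_adj.mp hc).symm
        omega
  rw [closerCount, hset, Set.ncard_coe_finset]

theorem stmt15 {V : Type*} [Fintype V] [DecidableEq V] (G : SimpleGraph V)
    [DecidableRel G.Adj] (hG : G.Connected) (hdiam : G.diam = 2) :
    mostar G = albertson G := by
  rw [mostar, albertson]
  apply Finset.sum_congr rfl
  intro e he
  induction e using Sym2.ind with
  | _ u v =>
    rw [SimpleGraph.mem_edgeFinset, SimpleGraph.mem_edgeSet] at he
    simp only [Sym2.lift_mk]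
    have hvu : G.Adj v u := he.symm
    have h1 := closerCount_eq G hG hdiam he
    have h2 := closerCount_eq G hG hdiam hvu
    have hvmem : v ∈ G.neighborFinset u \ G.neighborFinset v := by
      simp [he, G.irrefl]
    have humem : u ∈ G.neighborFinset v \ G.neighborFinset u := by
      simp [hvu, G.irrefl]
    have hunot : u ∉ (G.neighborFinset u \ G.neighborFinset v).erase v := by
      simp [G.irrefl]
    have hvnot : v ∉ (G.neighborFinset v \ G.neighborFinset u).erase u := by
      simp [G.irrefl]
    have c1 : closerCount G u v = (G.neighborFinset u \ G.neighborFinset v).card := by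
      rw [h1, Finset.card_insert_of_notMem hunot, Finset.card_erase_of_mem hvmem]
      have : 1 ≤ (G.neighborFinset u \ G.neighborFinset v).card :=
        Finset.card_pos.mpr ⟨v, hvmem⟩
      omega
    have c2 : closerCount G v u = (G.neighborFinset v \ G.neighborFinset u).card := by
      rw [h2, Finset.card_insert_of_notMem hvnot, Finset.card_erase_of_mem humem]
      have : 1 ≤ (G.neighborFinset v \ G.neighborFinset u).card :=
        Finset.card_pos.mpr ⟨u, humem⟩
      omega
    have key : (closerCount G u v : ℝ) - closerCount G v u
        = (G.degree u : ℝ) - G.degree v := by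
      have d1 : (G.neighborFinset u \ G.neighborFinset v).card
          + (G.neighborFinset u ∩ G.neighborFinset v).card = G.degree u := by
        rw [Finset.card_sdiff_add_card_inter]; rfl
      have d2 : (G.neighborFinset v \ G.neighborFinset u).card
          + (G.neighborFinset v ∩ G.neighborFinset u).card = G.degree v := by
        rw [Finset.card_sdiff_add_card_inter]; rfl
      rw [Finset.inter_comm] at d2
      rw [c1, c2]
      have := congrArg (Nat.cast : ℕ → ℝ) d1
      have := congrArg (Nat.cast : ℕ → ℝ) d2
      push_cast at *
      linarith
    rw [key]
end

section
/- Let G be a connected graph on n vertices with m edges. For each edge (u,v) let n_{uv} = |{w : d(w,u) = d(w,v)}|. Then Mo(G)² ≤ m²(n−2)² − m(n−2)·∑_{(u,v)∈E} n_{uv}, where Mo(G) = ∑_{e=(u,v)∈E}|n_e(u) − n_e(v)|. -/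
/-- The number of vertices equidistant from `u` and `v`. -/
noncomputable def equidistCount {V : Type*} (G : SimpleGraph V) (u v : V) : ℕ :=
  ({w | G.dist w u = G.dist w v} : Set V).ncard

lemma equidistCount_comm {V : Type*} (G : SimpleGraph V) (u v : V) :
    equidistCount G u v = equidistCount G v u := by
  unfold equidistCount
  congr 1
  ext w
  exact eq_comm

lemma closer_partition {V : Type*} [Fintype V] (G : SimpleGraph V) (u v : V) :
    closerCount G u v + closerCount G v u + equidistCount G u v = Fintype.card V := by
  classical
  unfold closerCount equidistCount
  set A : Set V := {w | G.dist w u < G.dist w v} with hA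
  set B : Set V := {w | G.dist w v < G.dist w u} with hB
  set C : Set V := {w | G.dist w u = G.dist w v} with hC
  have hdAB : Disjoint A B := by
    rw [Set.disjoint_left]
    intro w hw hw'
    simp only [hA, hB, Set.mem_setOf_eq] at hw hw'
    omega
  have hdABC : Disjoint (A ∪ B) C := by
    rw [Set.disjoint_left]
    intro w hw hw'
    simp only [hA, hB, hC, Set.mem_setOf_eq, Set.mem_union] at hw hw'
    omega
  have hU : A ∪ B ∪ C = Set.univ := by
    ext w
    simp only [hA, hB, hC, Set.mem_union, Set.mem_setOf_eq, Set.mem_univ, iff_true]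
    omega
  have h1 : (A ∪ B ∪ C).ncard = (A ∪ B).ncard + C.ncard :=
    Set.ncard_union_eq hdABC (Set.toFinite _) (Set.toFinite _)
  have h2 : (A ∪ B).ncard = A.ncard + B.ncard :=
    Set.ncard_union_eq hdAB (Set.toFinite _) (Set.toFinite _)
  have h3 : (A ∪ B ∪ C).ncard = Fintype.card V := by
    rw [hU, Set.ncard_univ, Nat.card_eq_fintype_card]
  omega

lemma closer_one_le {V : Type*} [Fintype V] (G : SimpleGraph V) (hG : G.Connected)
    {u v : V} (h : G.Adj u v) : 1 ≤ closerCount G u v := by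
  have hu : u ∈ ({w | G.dist w u < G.dist w v} : Set V) := by
    simp only [Set.mem_setOf_eq, SimpleGraph.dist_self]
    exact hG.pos_dist_of_ne h.ne
  have := Set.ncard_pos (s := ({w | G.dist w u < G.dist w v} : Set V)) (Set.toFinite _)
  exact this.mpr ⟨u, hu⟩

lemma key_bound {V : Type*} [Fintype V] (G : SimpleGraph V) (hG : G.Connected)
    {u v : V} (h : G.Adj u v) :
    |(closerCount G u v : ℝ) - (closerCount G v u : ℝ)| ≤
      (Fintype.card V : ℝ) - 2 - (equidistCount G u v : ℝ) := by
  have hsum := closer_partition G u v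
  have ha := closer_one_le G hG h
  have hb := closer_one_le G hG h.symm
  rw [abs_le]
  have hcast : (closerCount G u v : ℝ) + (closerCount G v u : ℝ) +
      (equidistCount G u v : ℝ) = (Fintype.card V : ℝ) := by
    exact_mod_cast congrArg (Nat.cast : ℕ → ℝ) hsum
  have ha' : (1 : ℝ) ≤ (closerCount G u v : ℝ) := by exact_mod_cast ha
  have hb' : (1 : ℝ) ≤ (closerCount G v u : ℝ) := by exact_mod_cast hb
  constructor <;> linarith

theorem stmt18 {V : Type*} [Fintype V] [DecidableEq V] (G : SimpleGraph V)
    [DecidableRel G.Adj] (hG : G.Connected) (hn : 2 ≤ Fintype.card V) :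
    mostar G ^ 2 ≤
      (G.edgeFinset.card : ℝ) ^ 2 * ((Fintype.card V : ℝ) - 2) ^ 2 -
        (G.edgeFinset.card : ℝ) * ((Fintype.card V : ℝ) - 2) *
          ∑ e ∈ G.edgeFinset,
            Sym2.lift ⟨fun u v => (equidistCount G u v : ℝ),
              fun u v => congrArg Nat.cast (equidistCount_comm G u v)⟩ e := by
  classical
  set n : ℝ := (Fintype.card V : ℝ) with hn'
  set m : ℝ := (G.edgeFinset.card : ℝ) with hm'
  set S : ℝ := ∑ e ∈ G.edgeFinset,
      Sym2.lift ⟨fun u v => (equidistCount G u v : ℝ),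
        fun u v => congrArg Nat.cast (equidistCount_comm G u v)⟩ e with hS
  have hMo_nonneg : 0 ≤ mostar G := by
    unfold mostar
    apply Finset.sum_nonneg
    intro e _
    induction e using Sym2.ind with
    | _ u v => simp [Sym2.lift_mk]
  have hS_nonneg : 0 ≤ S := by
    rw [hS]
    apply Finset.sum_nonneg
    intro e _
    induction e using Sym2.ind with
    | _ u v => simp [Sym2.lift_mk]
  have hMo_le : mostar G ≤ m * (n - 2) - S := by
    have hconst : m * (n - 2) = ∑ _e ∈ G.edgeFinset, (n - 2) := by
      rw [Finset.sum_const, nsmul_eq_mul, hm']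
    have hstep : mostar G + S ≤ ∑ _e ∈ G.edgeFinset, (n - 2) := by
      unfold mostar
      rw [hS, ← Finset.sum_add_distrib]
      apply Finset.sum_le_sum
      intro e he
      induction e using Sym2.ind with
      | _ u v =>
        rw [SimpleGraph.mem_edgeFinset, SimpleGraph.mem_edgeSet] at he
        simp only [Sym2.lift_mk]
        have := key_bound G hG he
        linarith
    rw [hconst]
    linarith
  have hm_nonneg : 0 ≤ m * (n - 2) := by
    apply mul_nonneg (by positivity)
    rw [hn']
    have : (2 : ℝ) ≤ (Fintype.card V : ℝ) := by exact_mod_cast hn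
    linarith
  nlinarith [hMo_nonneg, hMo_le, hS_nonneg, hm_nonneg, sq_nonneg (mostar G)]
end

section
/- Let G be a connected graph on n vertices with m > n²/4 edges. Then Mo(G)² ≤ m²(n−2)² − m²(n−2)(4m−n²)/n, where Mo(G) = ∑_{e=(u,v)∈E}|n_e(u) − n_e(v)|. -/
lemma closer_eq {V : Type*} [Fintype V] (G : SimpleGraph V) (u v : V) :
    closerCount G u v
      = (Finset.univ.filter (fun w => G.dist w u < G.dist w v)).card := by
  classical
  rw [closerCount, ← Set.ncard_coe_finset]
  congr 1; ext w; simp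

lemma per_edge {V : Type*} [Fintype V] [DecidableEq V] (G : SimpleGraph V)
    [DecidableRel G.Adj] (hG : G.Connected) {u v : V} (h : G.Adj u v) :
    |(closerCount G u v : ℝ) - (closerCount G v u : ℝ)| ≤
      2 * (Fintype.card V : ℝ) - 2 - G.degree u - G.degree v := by
  classical
  have hd : G.dist u v = 1 := SimpleGraph.dist_eq_one_iff_adj.mpr h
  have hd' : G.dist v u = 1 := SimpleGraph.dist_eq_one_iff_adj.mpr h.symm
  set A := Finset.univ.filter (fun w => G.dist w u < G.dist w v) with hA
  set B := Finset.univ.filter (fun w => G.dist w v < G.dist w u) with hB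
  set C := G.neighborFinset u ∩ G.neighborFinset v with hC
  have ha : closerCount G u v = A.card := closer_eq G u v
  have hb : closerCount G v u = B.card := closer_eq G v u
  have hu : u ∈ A := by
    simp [hA, G.dist_self, hd]
  have hv : v ∈ B := by
    simp [hB, G.dist_self, hd']
  have hA1 : 1 ≤ A.card := Finset.card_pos.mpr ⟨u, hu⟩
  have hB1 : 1 ≤ B.card := Finset.card_pos.mpr ⟨v, hv⟩
  have hdisjAB : Disjoint A B := by
    rw [Finset.disjoint_filter]
    intro w _ hw; omega
  have hdisjC : Disjoint (A ∪ B) C := by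
    rw [Finset.disjoint_left]
    intro w hw hwC
    rw [hC, Finset.mem_inter, SimpleGraph.mem_neighborFinset,
      SimpleGraph.mem_neighborFinset] at hwC
    have h1 : G.dist w u = 1 := SimpleGraph.dist_eq_one_iff_adj.mpr hwC.1.symm
    have h2 : G.dist w v = 1 := SimpleGraph.dist_eq_one_iff_adj.mpr hwC.2.symm
    simp only [hA, hB, Finset.mem_union, Finset.mem_filter] at hw
    omega
  have hcard : A.card + B.card + C.card ≤ Fintype.card V := by
    calc A.card + B.card + C.card = (A ∪ B).card + C.card := by
          rw [Finset.card_union_of_disjoint hdisjAB]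
      _ = ((A ∪ B) ∪ C).card := (Finset.card_union_of_disjoint hdisjC).symm
      _ ≤ Fintype.card V := Finset.card_le_univ _
  have hCge : (G.degree u : ℝ) + G.degree v - Fintype.card V ≤ C.card := by
    have hdu : (G.neighborFinset u).card = G.degree u := G.card_neighborFinset_eq_degree u
    have hdv : (G.neighborFinset v).card = G.degree v := G.card_neighborFinset_eq_degree v
    have h1 : C.card + (G.neighborFinset u ∪ G.neighborFinset v).card
        = G.degree u + G.degree v := by
      rw [hC, ← hdu, ← hdv]; exact Finset.card_inter_add_card_union _ _
    have h2 : (G.neighborFinset u ∪ G.neighborFinset v).card ≤ Fintype.card V :=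
      Finset.card_le_univ _
    have h3 : G.degree u + G.degree v ≤ C.card + Fintype.card V := by omega
    have h4 := (Nat.cast_le (α := ℝ)).mpr h3
    push_cast at h4; linarith
  have hcard' := (Nat.cast_le (α := ℝ)).mpr hcard
  push_cast at hcard'
  rw [ha, hb, abs_le]
  have hA1' : (1:ℝ) ≤ A.card := by exact_mod_cast hA1
  have hB1' : (1:ℝ) ≤ B.card := by exact_mod_cast hB1
  constructor <;> push_cast <;> linarith

lemma sum_deg_edges {V : Type*} [Fintype V] [DecidableEq V] (G : SimpleGraph V)
    [DecidableRel G.Adj] :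
    ∑ e ∈ G.edgeFinset,
      Sym2.lift ⟨fun u v => (G.degree u : ℝ) + G.degree v,
        fun u v => by ring⟩ e = ∑ w, (G.degree w : ℝ) ^ 2 := by
  classical
  have step1 : ∀ e ∈ G.edgeFinset,
      Sym2.lift ⟨fun u v => (G.degree u : ℝ) + G.degree v, fun u v => by ring⟩ e
        = ∑ w, if w ∈ e then (G.degree w : ℝ) else 0 := by
    intro e he
    induction e with
    | _ u v =>
      have hadj : G.Adj u v := by
        rw [SimpleGraph.mem_edgeFinset] at he; exact he
      have hne : u ≠ v := hadj.ne
      rw [← Finset.sum_filter]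
      have hf : Finset.univ.filter (fun w => w ∈ s(u, v)) = {u, v} := by
        ext w; simp [Sym2.mem_iff]
      rw [hf, Finset.sum_pair hne, Sym2.lift_mk]
  rw [Finset.sum_congr rfl step1, Finset.sum_comm]
  refine Finset.sum_congr rfl fun w _ => ?_
  rw [← Finset.sum_filter, ← SimpleGraph.incidenceFinset_eq_filter, Finset.sum_const,
    SimpleGraph.card_incidenceFinset_eq_degree, nsmul_eq_mul, sq]

theorem stmt19 {V : Type*} [Fintype V] [DecidableEq V] (G : SimpleGraph V)
    [DecidableRel G.Adj] (hG : G.Connected)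
    (hm : (Fintype.card V : ℝ) ^ 2 / 4 < G.edgeFinset.card) :
    mostar G ^ 2 ≤
      (G.edgeFinset.card : ℝ) ^ 2 * ((Fintype.card V : ℝ) - 2) ^ 2 -
        (G.edgeFinset.card : ℝ) ^ 2 * ((Fintype.card V : ℝ) - 2) *
          (4 * G.edgeFinset.card - (Fintype.card V : ℝ) ^ 2) /
            Fintype.card V := by
  classical
  set n : ℝ := (Fintype.card V : ℝ) with hn
  set m : ℝ := (G.edgeFinset.card : ℝ) with hmdef
  have hn0 : (0 : ℝ) < n := by
    have : Nonempty V := hG.nonempty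
    rw [hn]
    exact_mod_cast Fintype.card_pos (α := V)
  have hMo0 : 0 ≤ mostar G := by
    rw [mostar]
    refine Finset.sum_nonneg fun e _ => ?_
    induction e with
    | _ u v => rw [Sym2.lift_mk]; exact abs_nonneg _
  have hS := sum_deg_edges G
  set S : ℝ := ∑ w, (G.degree w : ℝ) ^ 2 with hSdef
  have hup : mostar G ≤ m * (2 * n - 2) - S := by
    have h1 : ∀ e ∈ G.edgeFinset,
        Sym2.lift ⟨fun u v => |(closerCount G u v : ℝ) - (closerCount G v u : ℝ)|,
          fun u v => abs_sub_comm _ _⟩ e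
        ≤ (2 * n - 2) -
          Sym2.lift ⟨fun u v => (G.degree u : ℝ) + G.degree v, fun u v => by ring⟩ e := by
      intro e he
      induction e with
      | _ u v =>
        have hadj : G.Adj u v := by rw [SimpleGraph.mem_edgeFinset] at he; exact he
        have hpe := per_edge G hG hadj
        show |(closerCount G u v : ℝ) - (closerCount G v u : ℝ)|
          ≤ (2 * n - 2) - ((G.degree u : ℝ) + G.degree v)
        rw [hn]; linarith
    calc mostar G ≤ ∑ e ∈ G.edgeFinset, ((2 * n - 2) -
          Sym2.lift ⟨fun u v => (G.degree u : ℝ) + G.degree v, fun u v => by ring⟩ e) := by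
          rw [mostar]; exact Finset.sum_le_sum h1
      _ = m * (2 * n - 2) - S := by
          rw [Finset.sum_sub_distrib, hS, Finset.sum_const, nsmul_eq_mul, hmdef]
  have hsum : ∑ w, (G.degree w : ℝ) = 2 * m := by
    rw [hmdef]
    exact_mod_cast congrArg (Nat.cast : ℕ → ℝ) G.sum_degrees_eq_twice_card_edges
  have hcs : (2 * m) ^ 2 ≤ n * S := by
    have := sq_sum_le_card_mul_sum_sq (s := (Finset.univ : Finset V))
      (f := fun w => (G.degree w : ℝ))
    rw [hsum] at this
    simpa [hn, hSdef] using this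
  have hupn : mostar G * n ≤ m * (2 * n - 2) * n - 4 * m ^ 2 := by
    have h2 : (mostar G) * n ≤ (m * (2 * n - 2) - S) * n :=
      mul_le_mul_of_nonneg_right hup hn0.le
    nlinarith
  have hm4 : n ^ 2 < 4 * m := by linarith
  have hm0 : (0 : ℝ) < m := by nlinarith
  have hD0 : 0 ≤ m * (2 * n - 2) * n - 4 * m ^ 2 :=
    le_trans (mul_nonneg hMo0 hn0.le) hupn
  have hch : 2 * m ≤ n * (n - 1) := by
    have h := G.card_edgeFinset_le_card_choose_two
    have h2 := (Nat.cast_le (α := ℝ)).mpr h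
    rw [Nat.cast_choose_two] at h2
    rw [hmdef, hn]; linarith
  have hn2 : (2 : ℝ) < n := by nlinarith
  have hMole : mostar G ≤ m * (n - 2) := by
    have : mostar G * n ≤ (m * (n - 2)) * n := by nlinarith
    exact le_of_mul_le_mul_right this hn0
  have hrhs : m ^ 2 * (n - 2) ^ 2 - m ^ 2 * (n - 2) * (4 * m - n ^ 2) / n
      = (m ^ 2 * (n - 2) ^ 2 * n - m ^ 2 * (n - 2) * (4 * m - n ^ 2)) / n := by
    field_simp
  rw [hrhs, le_div_iff₀ hn0]
  nlinarith [mul_le_mul_of_nonneg_left hupn hMo0,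
    mul_le_mul_of_nonneg_right hMole hD0]
end
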